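/- There is no function σ : ℝ³ → ℝ that is (Fréchet) differentiable at the point (1/3, 1/3, 1/3) and satisfies, for all λ in some open neighborhood of 1/3 in ℝ, the three identities σ(λ, (1−λ)/2, (1−λ)/2) = λ, σ((1−λ)/2, λ, (1−λ)/2) = λ, and σ((1−λ)/2, (1−λ)/2, λ) = λ. -/

import Mathlib

private lemma key_deriv {σ : (Fin 3 → ℝ) → ℝ}
    (hσ : DifferentiableAt ℝ σ ![(1 : ℝ) / 3, 1 / 3, 1 / 3])
    {γ : ℝ → (Fin 3 → ℝ)} {v : Fin 3 → ℝ}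
    (hγ : HasDerivAt γ v (1 / 3)) (hγc : γ (1 / 3) = ![(1 : ℝ) / 3, 1 / 3, 1 / 3])
    (heq : ∀ᶠ l in nhds ((1:ℝ)/3), σ (γ l) = l) :
    fderiv ℝ σ ![(1 : ℝ) / 3, 1 / 3, 1 / 3] v = 1 := by
  have hf := hσ.hasFDerivAt
  rw [← hγc] at hf
  have hcomp := hf.comp_hasDerivAt (1/3) hγ
  rw [hγc] at hcomp
  have hid : HasDerivAt (fun l : ℝ => l) (fderiv ℝ σ ![(1 : ℝ) / 3, 1 / 3, 1 / 3] v) (1/3) :=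
    hcomp.congr_of_eventuallyEq (heq.mono fun l h => h.symm)
  exact ((hasDerivAt_id _).unique hid).symm

theorem no_differentiable_axisymmetric_sigma :
    ¬ ∃ σ : (Fin 3 → ℝ) → ℝ,
      DifferentiableAt ℝ σ ![(1 : ℝ) / 3, 1 / 3, 1 / 3] ∧
      ∃ U : Set ℝ, IsOpen U ∧ (1 : ℝ) / 3 ∈ U ∧
        ∀ l ∈ U,
          σ ![l, (1 - l) / 2, (1 - l) / 2] = l ∧
          σ ![(1 - l) / 2, l, (1 - l) / 2] = l ∧
          σ ![(1 - l) / 2, (1 - l) / 2, l] = l := by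
  rintro ⟨σ, hσ, U, hU, hmem, hval⟩
  have hnhds : U ∈ nhds ((1:ℝ)/3) := hU.mem_nhds hmem
  have hhalf : HasDerivAt (fun l : ℝ => (1 - l) / 2) (-(1:ℝ)/2) (1/3) := by
    have := ((hasDerivAt_id' ((1:ℝ)/3)).const_sub 1).div_const 2
    exact this
  have h1 : HasDerivAt (fun l : ℝ => ![l, (1 - l) / 2, (1 - l) / 2])
      (![1, -(1:ℝ)/2, -(1:ℝ)/2]) (1/3) := by
    rw [hasDerivAt_pi]
    intro i
    fin_cases i
    · simp; exact hasDerivAt_id' _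
    · simpa using hhalf
    · simpa using hhalf
  have h2 : HasDerivAt (fun l : ℝ => ![(1 - l) / 2, l, (1 - l) / 2])
      (![-(1:ℝ)/2, 1, -(1:ℝ)/2]) (1/3) := by
    rw [hasDerivAt_pi]
    intro i
    fin_cases i
    · simpa using hhalf
    · simp; exact hasDerivAt_id' _
    · simpa using hhalf
  have h3 : HasDerivAt (fun l : ℝ => ![(1 - l) / 2, (1 - l) / 2, l])
      (![-(1:ℝ)/2, -(1:ℝ)/2, 1]) (1/3) := by
    rw [hasDerivAt_pi]
    intro i
    fin_cases i
    · simpa using hhalf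
    · simpa using hhalf
    · simp; exact hasDerivAt_id' _
  have hc : (![(1:ℝ)/3, (1 - 1/3) / 2, (1 - 1/3) / 2]) = ![(1 : ℝ) / 3, 1 / 3, 1 / 3] := by
    funext i; fin_cases i <;> norm_num
  have hc2 : (![(1 - 1/3) / 2, (1:ℝ)/3, (1 - 1/3) / 2]) = ![(1 : ℝ) / 3, 1 / 3, 1 / 3] := by
    funext i; fin_cases i <;> norm_num
  have hc3 : (![(1 - 1/3) / 2, (1 - 1/3) / 2, (1:ℝ)/3]) = ![(1 : ℝ) / 3, 1 / 3, 1 / 3] := by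
    funext i; fin_cases i <;> norm_num
  set f := fderiv ℝ σ ![(1 : ℝ) / 3, 1 / 3, 1 / 3] with hfdef
  have k1 : f ![1, -(1:ℝ)/2, -(1:ℝ)/2] = 1 :=
    key_deriv hσ h1 hc (Filter.eventually_of_mem hnhds fun l hl => (hval l hl).1)
  have k2 : f ![-(1:ℝ)/2, 1, -(1:ℝ)/2] = 1 :=
    key_deriv hσ h2 hc2 (Filter.eventually_of_mem hnhds fun l hl => (hval l hl).2.1)
  have k3 : f ![-(1:ℝ)/2, -(1:ℝ)/2, 1] = 1 :=
    key_deriv hσ h3 hc3 (Filter.eventually_of_mem hnhds fun l hl => (hval l hl).2.2)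
  have hsum : (![1, -(1:ℝ)/2, -(1:ℝ)/2] + ![-(1:ℝ)/2, 1, -(1:ℝ)/2] + ![-(1:ℝ)/2, -(1:ℝ)/2, 1])
      = (0 : Fin 3 → ℝ) := by
    funext i; fin_cases i <;> simp <;> norm_num
  have : (3 : ℝ) = 0 := by
    have := f.map_add (![1, -(1:ℝ)/2, -(1:ℝ)/2] + ![-(1:ℝ)/2, 1, -(1:ℝ)/2]) ![-(1:ℝ)/2, -(1:ℝ)/2, 1]
    rw [hsum, f.map_zero, f.map_add, k1, k2, k3] at this
    linarith
  norm_num at this
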